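/- There exist constants ε₀ > 0, c > 0, and k₀ such that for every integer k ≥ k₀ the following holds. Let P be the set of points (ik, 0, k²) for integers |i| ≤ k/4 together with (0, jk, −k²) for integers |j| ≤ k/4, and let Σ ⊆ ℝ³ be the union of the unit spheres centered at the points of P (so that the local feature size equals 1 at every point of Σ, and an ε-sample of Σ is a set S ⊆ Σ such that every point of Σ is within distance ε of S). Then for every ε with 0 < ε < ε₀, every finite ε-sample S of Σ has at least c·k² Delaunay edges. -/

import Mathlib

noncomputable section
open scoped Classical ENNReal Pointwise
open MeasureTheory Real

/-- Points of `ℝ³` as Euclidean space. -/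
abbrev E3 : Type := EuclideanSpace ℝ (Fin 3)

/-- The point `(x, y, z) ∈ ℝ³`. -/
def mk3 (x y z : ℝ) : E3 := (WithLp.equiv 2 (Fin 3 → ℝ)).symm ![x, y, z]

/-- `p` and `q` form a Delaunay edge of the finite set `S`: they are distinct points of `S`
lying on a sphere having no point of `S` in its interior. -/
def IsDelaunayEdge (S : Finset E3) (p q : E3) : Prop :=
  p ∈ S ∧ q ∈ S ∧ p ≠ q ∧
    ∃ (c : E3) (ρ : ℝ), 0 < ρ ∧ dist c p = ρ ∧ dist c q = ρ ∧ ∀ s ∈ S, ρ ≤ dist c s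

/-- The number of (unordered) Delaunay edges of `S`. -/
def delaunayEdgeCount (S : Finset E3) : ℕ :=
  Set.ncard {pq : E3 × E3 | IsDelaunayEdge S pq.1 pq.2} / 2

/-- The minimum pairwise distance of a finite point set. -/
def minPairDist (S : Finset E3) : ℝ :=
  sInf {d : ℝ | ∃ p ∈ S, ∃ q ∈ S, p ≠ q ∧ d = dist p q}

/-- The spread of a finite point set: diameter divided by minimum pairwise distance. -/
def spread (S : Finset E3) : ℝ := Metric.diam (S : Set E3) / minPairDist S
/-- The point `p_i = (ik, 0, k²)`. -/
def rowP (k : ℕ) (i : ℤ) : E3 := mk3 ((i : ℝ) * k) 0 ((k : ℝ) ^ 2)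

/-- The point `q_j = (0, jk, −k²)`. -/
def rowQ (k : ℕ) (j : ℤ) : E3 := mk3 0 ((j : ℝ) * k) (-(k : ℝ) ^ 2)

/-- The point set `P`: the `p_i` for integers `|i| ≤ k/4` and the `q_j` for `|j| ≤ k/4`. -/
def rowsPQ (k : ℕ) : Set E3 :=
  {x : E3 | ∃ i : ℤ, 4 * |i| ≤ (k : ℤ) ∧ x = rowP k i} ∪
  {x : E3 | ∃ j : ℤ, 4 * |j| ≤ (k : ℤ) ∧ x = rowQ k j}

/-- The surface `Σ`: the union of the unit spheres centered at the points of `P`. -/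
def unitSpheresSurface (k : ℕ) : Set E3 := ⋃ p ∈ rowsPQ k, Metric.sphere p 1

/-! ### Auxiliary lemmas -/

lemma dist_sq_mk3 (x y z x' y' z' : ℝ) :
    dist (mk3 x y z) (mk3 x' y' z') ^ 2 = (x-x')^2 + (y-y')^2 + (z-z')^2 := by
  rw [EuclideanSpace.dist_eq, Real.sq_sqrt (by positivity)]
  simp [mk3, Fin.sum_univ_three, Real.dist_eq, sq_abs]

lemma cont_mk3 (a b : ℝ) : Continuous fun t : ℝ => mk3 a b t := by
  have h : (fun t : ℝ => mk3 a b t) = fun t : ℝ => mk3 a b 0 + t • mk3 0 0 1 := by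
    funext t; ext i
    fin_cases i <;> simp [mk3]
  rw [h]
  exact continuous_const.add (continuous_id.smul continuous_const)

lemma le_of_sq_le {x y : ℝ} (hy : 0 ≤ y) (h : x^2 ≤ y^2) : x ≤ y := by
  nlinarith [sq_nonneg (x+y)]

/-- the point on the unit sphere around `p` closest to `c`. -/
lemma nearest_pt (c p : E3) (d : ℝ) (hd : dist c p = d) (h1 : 1 ≤ d) :
    dist c (p + d⁻¹ • (c - p)) = d - 1 ∧ dist (p + d⁻¹ • (c - p)) p = 1 := by
  have hd0 : 0 < d := lt_of_lt_of_le one_pos h1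
  rw [dist_eq_norm] at hd
  constructor
  · rw [dist_eq_norm]
    have h2 : c - (p + d⁻¹ • (c - p)) = (1 - d⁻¹) • (c - p) := by module
    rw [h2, norm_smul, hd, Real.norm_eq_abs,
      abs_of_nonneg (by rw [sub_nonneg]; exact inv_le_one_iff₀.mpr (Or.inr h1))]
    field_simp
  · rw [dist_eq_norm]
    have h2 : p + d⁻¹ • (c - p) - p = d⁻¹ • (c - p) := by module
    rw [h2, norm_smul, hd, Real.norm_eq_abs, abs_of_nonneg (by positivity)]
    field_simp

lemma dist_sq_rowP_rowP (k : ℕ) (i i' : ℤ) :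
    dist (rowP k i) (rowP k i') ^ 2 = ((i:ℝ) - i')^2 * (k:ℝ)^2 := by
  rw [rowP, rowP, dist_sq_mk3]; ring

lemma dist_sq_rowQ_rowQ (k : ℕ) (j j' : ℤ) :
    dist (rowQ k j) (rowQ k j') ^ 2 = ((j:ℝ) - j')^2 * (k:ℝ)^2 := by
  rw [rowQ, rowQ, dist_sq_mk3]; ring

lemma dist_sq_rowP_rowQ (k : ℕ) (i j : ℤ) :
    dist (rowP k i) (rowQ k j) ^ 2
      = (i:ℝ)^2 * (k:ℝ)^2 + (j:ℝ)^2 * (k:ℝ)^2 + 4 * (k:ℝ)^4 := by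
  rw [rowP, rowQ, dist_sq_mk3]; ring

lemma one_le_int_sq {i i' : ℤ} (h : i ≠ i') : (1:ℝ) ≤ ((i:ℝ) - i')^2 := by
  have h1 : (1:ℤ) ≤ |i - i'| := Int.one_le_abs (sub_ne_zero.mpr h)
  have h2 : (1:ℝ) ≤ |((i:ℝ) - i')| := by
    have : ((1:ℤ):ℝ) ≤ ((|i - i'| : ℤ) : ℝ) := by exact_mod_cast h1
    push_cast at this
    convert this using 2
  nlinarith [abs_nonneg ((i:ℝ) - i'), sq_abs ((i:ℝ) - i')]

/-- distinct rows centers are at distance at least 3 (for k ≥ 3). -/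
lemma rowP_far {k : ℕ} (hk : 3 ≤ k) {i i' : ℤ} (h : i ≠ i') :
    3 ≤ dist (rowP k i) (rowP k i') := by
  have hk' : (3:ℝ) ≤ (k:ℝ) := by exact_mod_cast hk
  refine le_of_sq_le dist_nonneg ?_
  rw [dist_sq_rowP_rowP]
  nlinarith [one_le_int_sq h]

lemma rowQ_far {k : ℕ} (hk : 3 ≤ k) {j j' : ℤ} (h : j ≠ j') :
    3 ≤ dist (rowQ k j) (rowQ k j') := by
  have hk' : (3:ℝ) ≤ (k:ℝ) := by exact_mod_cast hk
  refine le_of_sq_le dist_nonneg ?_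
  rw [dist_sq_rowQ_rowQ]
  nlinarith [one_le_int_sq h]

lemma rowPQ_far {k : ℕ} (hk : 3 ≤ k) (i j : ℤ) :
    3 ≤ dist (rowP k i) (rowQ k j) := by
  have hk' : (3:ℝ) ≤ (k:ℝ) := by exact_mod_cast hk
  refine le_of_sq_le dist_nonneg ?_
  rw [dist_sq_rowP_rowQ]
  have h9 : (9:ℝ) ≤ (k:ℝ)^2 := by nlinarith
  nlinarith [sq_nonneg ((i:ℝ)), sq_nonneg ((j:ℝ)), sq_nonneg ((k:ℝ)^2 - 9), sq_nonneg ((k:ℝ))]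

/-- Any two distinct points of `rowsPQ k` are at distance at least 3. -/
lemma rowsPQ_far {k : ℕ} (hk : 3 ≤ k) {p q : E3} (hp : p ∈ rowsPQ k) (hq : q ∈ rowsPQ k)
    (hpq : p ≠ q) : 3 ≤ dist p q := by
  rcases hp with ⟨i, hi, rfl⟩ | ⟨i, hi, rfl⟩ <;> rcases hq with ⟨j, hj, rfl⟩ | ⟨j, hj, rfl⟩
  · exact rowP_far hk (fun h => hpq (by rw [h]))
  · exact rowPQ_far hk i j
  · rw [dist_comm]; exact rowPQ_far hk j i
  · exact rowQ_far hk (fun h => hpq (by rw [h]))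

lemma mem_surface_iff {k : ℕ} {x : E3} :
    x ∈ unitSpheresSurface k ↔ ∃ p ∈ rowsPQ k, dist x p = 1 := by
  simp only [unitSpheresSurface, Set.mem_iUnion, Metric.mem_sphere, exists_prop]

/-- a point of the surface close to the sphere around `p` is on that very sphere. -/
lemma on_same_sphere {k : ℕ} (hk : 3 ≤ k) {p : E3} (hp : p ∈ rowsPQ k) {a : E3}
    (ha : a ∈ unitSpheresSurface k) (hclose : dist a p < 2) : dist a p = 1 := by
  rcases mem_surface_iff.mp ha with ⟨q, hq, haq⟩
  by_cases hpq : q = p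
  · rwa [hpq] at haq
  · exfalso
    have h3 : 3 ≤ dist p q := rowsPQ_far hk hp hq (Ne.symm hpq)
    have := dist_triangle p a q
    rw [dist_comm p a] at this
    linarith

lemma gap_lemma {A B s : ℝ} (hA0 : 0 ≤ A) (hB0 : 0 ≤ B) (hA : A ≤ 6/5*s) (hB : B ≤ 6/5*s)
    (hs : 0 < s) (he : A^2 - B^2 = s/2) : 1/6 ≤ A - B := by
  nlinarith [mul_nonneg (add_nonneg hA0 hB0) hs.le]

lemma far_lemma {A D s ε : ℝ} (hD0 : 0 ≤ D) (hA0 : 0 ≤ A) (hA : A ≤ 6/5*s)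
    (hs : 100^2 ≤ s) (hε0 : 0 < ε) (hε : ε < 1/32) (h : A^2 + s ≤ D^2) : A + ε ≤ D := by
  refine le_of_sq_le hD0 ?_
  nlinarith

set_option maxHeartbeats 2000000 in
lemma key_edge {k : ℕ} (hk : 100 ≤ k) {ε : ℝ} (hε0 : 0 < ε) (hε : ε < 1/32)
    {S : Finset E3} (hS : ↑S ⊆ unitSpheresSurface k)
    (hsample : ∀ x ∈ unitSpheresSurface k, ∃ p ∈ S, dist x p ≤ ε)
    {i j : ℤ} (hi : 4 * |i| ≤ (k:ℤ)) (hj : 4 * |j| ≤ (k:ℤ)) :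
    ∃ a b : E3, IsDelaunayEdge S a b ∧ dist a (rowP k i) = 1 ∧ dist b (rowQ k j) = 1 := by
  have hk3 : 3 ≤ k := le_trans (by norm_num) hk
  set K : ℝ := (k:ℝ) with hKdef
  have hK100 : (100:ℝ) ≤ K := by rw [hKdef]; exact_mod_cast hk
  have habs : ∀ m : ℤ, 4 * |m| ≤ (k:ℤ) → 16 * (m:ℝ)^2 ≤ K^2 := by
    intro m hm
    have h1 : ((4 * |m| : ℤ) : ℝ) ≤ K := by rw [hKdef]; exact_mod_cast hm
    push_cast at h1
    have h0 : (0:ℝ) ≤ 4 * |(m:ℝ)| := by positivity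
    nlinarith [sq_abs ((m:ℝ)), mul_self_le_mul_self h0 h1]
  have hiK : (i:ℝ)^2 ≤ K^2/16 := by linarith [habs i hi]
  have hjK : (j:ℝ)^2 ≤ K^2/16 := by linarith [habs j hj]
  set ct : ℝ → E3 := fun t => mk3 ((i:ℝ)*K) ((j:ℝ)*K) t with hctdef
  have hrowPmem : rowP k i ∈ rowsPQ k := Or.inl ⟨i, hi, rfl⟩
  have hrowQmem : rowQ k j ∈ rowsPQ k := Or.inr ⟨j, hj, rfl⟩
  have hdP : ∀ (t : ℝ) (i' : ℤ), dist (ct t) (rowP k i') ^ 2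
      = ((i:ℝ) - i')^2 * K^2 + (j:ℝ)^2 * K^2 + (t - K^2)^2 := by
    intro t i'
    show dist (mk3 ((i:ℝ)*K) ((j:ℝ)*K) t) (rowP k i') ^ 2 = _
    rw [rowP, dist_sq_mk3, hKdef]; ring
  have hdQ : ∀ (t : ℝ) (j' : ℤ), dist (ct t) (rowQ k j') ^ 2
      = (i:ℝ)^2 * K^2 + ((j:ℝ) - j')^2 * K^2 + (t + K^2)^2 := by
    intro t j'
    show dist (mk3 ((i:ℝ)*K) ((j:ℝ)*K) t) (rowQ k j') ^ 2 = _
    rw [rowQ, dist_sq_mk3, hKdef]; ring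
  set t0 : ℝ := ((j:ℝ)^2 - (i:ℝ)^2)/4 with ht0def
  set t1 : ℝ := t0 - 1/8 with ht1def
  set t2 : ℝ := t0 + 1/8 with ht2def
  have ht12 : t1 ≤ t2 := by rw [ht1def, ht2def]; linarith
  have htrange : ∀ t ∈ Set.Icc t1 t2, -(K^2/32) ≤ t ∧ t ≤ K^2/32 := by
    intro t ht
    obtain ⟨h1, h2⟩ := ht
    rw [ht1def, ht0def] at h1
    rw [ht2def, ht0def] at h2
    constructor <;> nlinarith [sq_nonneg ((i:ℝ)), sq_nonneg ((j:ℝ))]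
  -- upper and lower bounds on the two radii, valid on the whole range
  have hPub : ∀ t ∈ Set.Icc t1 t2, dist (ct t) (rowP k i) ≤ (6/5)*K^2 := by
    intro t ht
    obtain ⟨h1, h2⟩ := htrange t ht
    refine le_of_sq_le (by positivity) ?_
    rw [hdP t i]
    have ht2 : t^2 ≤ (K^2/32)^2 := by nlinarith
    nlinarith [sq_nonneg K, sq_nonneg (K^2)]
  have hPlb : ∀ t ∈ Set.Icc t1 t2, (9/10)*K^2 ≤ dist (ct t) (rowP k i) := by
    intro t ht
    obtain ⟨h1, h2⟩ := htrange t ht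
    refine le_of_sq_le dist_nonneg ?_
    rw [hdP t i]
    nlinarith [sq_nonneg ((j:ℝ)*K), sq_nonneg ((i:ℝ) - i), sq_nonneg K, sq_nonneg (K^2)]
  have hQub : ∀ t ∈ Set.Icc t1 t2, dist (ct t) (rowQ k j) ≤ (6/5)*K^2 := by
    intro t ht
    obtain ⟨h1, h2⟩ := htrange t ht
    refine le_of_sq_le (by positivity) ?_
    rw [hdQ t j]
    have ht2 : t^2 ≤ (K^2/32)^2 := by nlinarith
    nlinarith [sq_nonneg K, sq_nonneg (K^2)]
  have hQlb : ∀ t ∈ Set.Icc t1 t2, (9/10)*K^2 ≤ dist (ct t) (rowQ k j) := by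
    intro t ht
    obtain ⟨h1, h2⟩ := htrange t ht
    refine le_of_sq_le dist_nonneg ?_
    rw [hdQ t j]
    nlinarith [sq_nonneg ((i:ℝ)*K), sq_nonneg ((j:ℝ) - j), sq_nonneg K, sq_nonneg (K^2)]
  have hP1 : ∀ t ∈ Set.Icc t1 t2, 1 ≤ dist (ct t) (rowP k i) := by
    intro t ht; nlinarith [hPlb t ht]
  have hQ1 : ∀ t ∈ Set.Icc t1 t2, 1 ≤ dist (ct t) (rowQ k j) := by
    intro t ht; nlinarith [hQlb t ht]
  -- nearby sample points
  have near : ∀ (c : E3), ∀ p ∈ rowsPQ k, 1 ≤ dist c p →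
      ∃ a ∈ S, dist a p = 1 ∧ dist c a ≤ dist c p - 1 + ε := by
    intro c p hp h1
    obtain ⟨hx1, hx2⟩ := nearest_pt c p (dist c p) rfl h1
    set x := p + (dist c p)⁻¹ • (c - p) with hxdef
    have hxSig : x ∈ unitSpheresSurface k := mem_surface_iff.mpr ⟨p, hp, hx2⟩
    obtain ⟨a, haS, hax⟩ := hsample x hxSig
    have haSig : a ∈ unitSpheresSurface k := hS haS
    have hap : dist a p = 1 := by
      apply on_same_sphere hk3 hp haSig
      calc dist a p ≤ dist a x + dist x p := dist_triangle a x p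
        _ < 2 := by rw [dist_comm a x]; linarith
    refine ⟨a, haS, hap, ?_⟩
    calc dist c a ≤ dist c x + dist x a := dist_triangle c x a
      _ ≤ (dist c p - 1) + ε := by rw [hx1]; linarith [hax, dist_comm x a]
  -- the candidate Delaunay-edge endpoints live in these sets
  set Sp : Set E3 := {s : E3 | s ∈ S ∧ dist s (rowP k i) = 1} with hSpdef
  set Sq : Set E3 := {s : E3 | s ∈ S ∧ dist s (rowQ k j) = 1} with hSqdef
  have hSpfin : Sp.Finite := S.finite_toSet.subset fun s hs => hs.1
  have hSqfin : Sq.Finite := S.finite_toSet.subset fun s hs => hs.1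
  have hSpne : Sp.Nonempty := by
    obtain ⟨a, haS, hap, -⟩ := near (ct t1) (rowP k i) hrowPmem (hP1 t1 ⟨le_refl _, ht12⟩)
    exact ⟨a, haS, hap⟩
  have hSqne : Sq.Nonempty := by
    obtain ⟨a, haS, hap, -⟩ := near (ct t1) (rowQ k j) hrowQmem (hQ1 t1 ⟨le_refl _, ht12⟩)
    exact ⟨a, haS, hap⟩
  -- bounds on the infimum distances
  have hdPl : ∀ t : ℝ, dist (ct t) (rowP k i) - 1 ≤ Metric.infDist (ct t) Sp := by
    intro t
    obtain ⟨a, haSp, hEq⟩ := hSpfin.isCompact.exists_infDist_eq_dist hSpne (ct t)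
    rw [hEq]
    have h3 := dist_triangle (ct t) a (rowP k i)
    linarith [haSp.2]
  have hdQl : ∀ t : ℝ, dist (ct t) (rowQ k j) - 1 ≤ Metric.infDist (ct t) Sq := by
    intro t
    obtain ⟨a, haSq, hEq⟩ := hSqfin.isCompact.exists_infDist_eq_dist hSqne (ct t)
    rw [hEq]
    have h3 := dist_triangle (ct t) a (rowQ k j)
    linarith [haSq.2]
  have hdPu : ∀ t ∈ Set.Icc t1 t2,
      Metric.infDist (ct t) Sp ≤ dist (ct t) (rowP k i) - 1 + ε := by
    intro t ht
    obtain ⟨a, haS, hap, hca⟩ := near (ct t) (rowP k i) hrowPmem (hP1 t ht)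
    exact le_trans (Metric.infDist_le_dist_of_mem ⟨haS, hap⟩) hca
  have hdQu : ∀ t ∈ Set.Icc t1 t2,
      Metric.infDist (ct t) Sq ≤ dist (ct t) (rowQ k j) - 1 + ε := by
    intro t ht
    obtain ⟨a, haS, hap, hca⟩ := near (ct t) (rowQ k j) hrowQmem (hQ1 t ht)
    exact le_trans (Metric.infDist_le_dist_of_mem ⟨haS, hap⟩) hca
  -- endpoint sign conditions
  have ht1mem : t1 ∈ Set.Icc t1 t2 := ⟨le_refl _, ht12⟩
  have ht2mem : t2 ∈ Set.Icc t1 t2 := ⟨ht12, le_refl _⟩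
  have e1 : dist (ct t1) (rowP k i) ^ 2 - dist (ct t1) (rowQ k j) ^ 2 = K^2/2 := by
    rw [hdP t1 i, hdQ t1 j, ht1def, ht0def]; ring
  have e2 : dist (ct t2) (rowQ k j) ^ 2 - dist (ct t2) (rowP k i) ^ 2 = K^2/2 := by
    rw [hdP t2 i, hdQ t2 j, ht2def, ht0def]; ring
  have hK2pos : (0:ℝ) < K^2 := by positivity
  have gap1 : 1/6 ≤ dist (ct t1) (rowP k i) - dist (ct t1) (rowQ k j) :=
    gap_lemma dist_nonneg dist_nonneg (hPub t1 ht1mem) (hQub t1 ht1mem) hK2pos e1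
  have gap2 : 1/6 ≤ dist (ct t2) (rowQ k j) - dist (ct t2) (rowP k i) :=
    gap_lemma dist_nonneg dist_nonneg (hQub t2 ht2mem) (hPub t2 ht2mem) hK2pos e2
  have s1 : 0 < Metric.infDist (ct t1) Sp - Metric.infDist (ct t1) Sq := by
    have l := hdPl t1
    have u := hdQu t1 ht1mem
    linarith
  have s2 : Metric.infDist (ct t2) Sp - Metric.infDist (ct t2) Sq < 0 := by
    have l := hdQl t2
    have u := hdPu t2 ht2mem
    linarith
  -- intermediate value theorem
  have hcont : ContinuousOn
      (fun t => Metric.infDist (ct t) Sp - Metric.infDist (ct t) Sq) (Set.Icc t1 t2) := by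
    apply Continuous.continuousOn
    exact ((Metric.continuous_infDist_pt Sp).comp (cont_mk3 _ _)).sub
      ((Metric.continuous_infDist_pt Sq).comp (cont_mk3 _ _))
  have hIVT := intermediate_value_Icc' ht12 hcont
  have h0mem : (0:ℝ) ∈ Set.Icc
      ((fun t => Metric.infDist (ct t) Sp - Metric.infDist (ct t) Sq) t2)
      ((fun t => Metric.infDist (ct t) Sp - Metric.infDist (ct t) Sq) t1) :=
    ⟨le_of_lt s2, le_of_lt s1⟩
  obtain ⟨tm, htm, hftm⟩ := hIVT h0mem
  have hftm' : Metric.infDist (ct tm) Sp - Metric.infDist (ct tm) Sq = 0 := hftm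
  set r : ℝ := Metric.infDist (ct tm) Sp with hrdef
  have hrq : Metric.infDist (ct tm) Sq = r := by rw [hrdef]; linarith [hftm']
  obtain ⟨a, haSp, hra⟩ := hSpfin.isCompact.exists_infDist_eq_dist hSpne (ct tm)
  obtain ⟨b, hbSq, hrb⟩ := hSqfin.isCompact.exists_infDist_eq_dist hSqne (ct tm)
  have hrpos : 0 < r := by
    have := hdPl tm
    have := hPlb tm htm
    nlinarith
  have hrupP : r ≤ dist (ct tm) (rowP k i) - 1 + ε := hdPu tm htm
  have hrupQ : r ≤ dist (ct tm) (rowQ k j) - 1 + ε := by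
    rw [← hrq]; exact hdQu tm htm
  -- the witnessing ball is empty
  have hempty : ∀ s ∈ S, r ≤ dist (ct tm) s := by
    intro s hsS
    obtain ⟨p, hp, hsp⟩ := mem_surface_iff.mp (hS hsS)
    rcases hp with ⟨i', hi', rfl⟩ | ⟨j', hj', rfl⟩
    · by_cases hii : i' = i
      · subst hii
        exact Metric.infDist_le_dist_of_mem (⟨hsS, hsp⟩ : s ∈ Sp)
      · have hs100 : (100:ℝ)^2 ≤ K^2 := by nlinarith
        have hsq : dist (ct tm) (rowP k i) ^2 + K^2 ≤ dist (ct tm) (rowP k i') ^2 := by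
          rw [hdP tm i, hdP tm i']
          nlinarith [one_le_int_sq (fun h => hii (h.symm)), sq_nonneg K]
        have hD : dist (ct tm) (rowP k i) + ε ≤ dist (ct tm) (rowP k i') :=
          far_lemma dist_nonneg dist_nonneg (hPub tm htm) hs100 hε0 hε hsq
        have htri := dist_triangle (ct tm) s (rowP k i')
        linarith [hsp, hrupP]
    · by_cases hjj : j' = j
      · subst hjj
        rw [← hrq]
        exact Metric.infDist_le_dist_of_mem (⟨hsS, hsp⟩ : s ∈ Sq)
      · have hs100 : (100:ℝ)^2 ≤ K^2 := by nlinarith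
        have hsq : dist (ct tm) (rowQ k j) ^2 + K^2 ≤ dist (ct tm) (rowQ k j') ^2 := by
          rw [hdQ tm j, hdQ tm j']
          nlinarith [one_le_int_sq (fun h => hjj (h.symm)), sq_nonneg K]
        have hD : dist (ct tm) (rowQ k j) + ε ≤ dist (ct tm) (rowQ k j') :=
          far_lemma dist_nonneg dist_nonneg (hQub tm htm) hs100 hε0 hε hsq
        have htri := dist_triangle (ct tm) s (rowQ k j')
        linarith [hsp, hrupQ]
  have hab : a ≠ b := by
    intro h
    subst h
    have h1 : dist (rowP k i) (rowQ k j) ≤ dist (rowP k i) a + dist a (rowQ k j) :=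
      dist_triangle _ _ _
    linarith [haSp.2, hbSq.2, rowPQ_far hk3 i j, dist_comm (rowP k i) a]
  exact ⟨a, b, ⟨haSp.1, hbSq.1, hab, ct tm, r, hrpos, hra.symm, hrb.symm.trans hrq, hempty⟩, haSp.2, hbSq.2⟩

lemma IsDelaunayEdge.symm' {S : Finset E3} {p q : E3} (h : IsDelaunayEdge S p q) :
    IsDelaunayEdge S q p := by
  obtain ⟨h1, h2, h3, c, ρ, h4, h5, h6, h7⟩ := h
  exact ⟨h2, h1, h3.symm, c, ρ, h4, h6, h5, h7⟩

lemma eq_of_sphereP {k : ℕ} (hk3 : 3 ≤ k) {i i' : ℤ} {a : E3}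
    (h1 : dist a (rowP k i) = 1) (h2 : dist a (rowP k i') = 1) : i = i' := by
  by_contra h
  have htri := dist_triangle (rowP k i) a (rowP k i')
  linarith [rowP_far hk3 h, dist_comm (rowP k i) a]

lemma eq_of_sphereQ {k : ℕ} (hk3 : 3 ≤ k) {j j' : ℤ} {a : E3}
    (h1 : dist a (rowQ k j) = 1) (h2 : dist a (rowQ k j') = 1) : j = j' := by
  by_contra h
  have htri := dist_triangle (rowQ k j) a (rowQ k j')
  linarith [rowQ_far hk3 h, dist_comm (rowQ k j) a]

lemma not_both_PQ {k : ℕ} (hk3 : 3 ≤ k) {i j : ℤ} {a : E3}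
    (h1 : dist a (rowP k i) = 1) (h2 : dist a (rowQ k j) = 1) : False := by
  have htri := dist_triangle (rowP k i) a (rowQ k j)
  linarith [rowPQ_far hk3 i j, dist_comm (rowP k i) a]


/-- For all sufficiently large `k` and all sufficiently small `ε > 0`, every finite
`ε`-sample of the union of unit spheres centered at the points of `P` (where the local
feature size is identically `1`, so an `ε`-sample is a subset of `Σ` such that every point
of `Σ` is within distance `ε` of it) has at least `c·k²` Delaunay edges. -/
theorem unitSpheresSurface_sample_many_edges :
    ∃ ε₀ : ℝ, 0 < ε₀ ∧ ∃ c : ℝ, 0 < c ∧ ∃ k₀ : ℕ, ∀ k : ℕ, k₀ ≤ k →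
      ∀ ε : ℝ, 0 < ε → ε < ε₀ →
        ∀ S : Finset E3, ↑S ⊆ unitSpheresSurface k →
          (∀ x ∈ unitSpheresSurface k, ∃ p ∈ S, dist x p ≤ ε) →
          c * (k : ℝ) ^ 2 ≤ (delaunayEdgeCount S : ℝ) := by
  refine ⟨1/32, by norm_num, 1/16, by norm_num, 100, ?_⟩
  intro k hk ε hε0 hε S hS hsample
  have hk3 : 3 ≤ k := le_trans (by norm_num) hk
  set m : ℕ := k / 4 with hmdef
  set I : Finset ℤ := Finset.Icc (-(m:ℤ)) (m:ℤ) with hIdef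
  have hIcard : I.card = 2*m+1 := by rw [hIdef, Int.card_Icc]; omega
  have hmem : ∀ i : ℤ, i ∈ I → 4 * |i| ≤ (k:ℤ) := by
    intro i hiI
    rw [hIdef, Finset.mem_Icc] at hiI
    have habs : |i| ≤ (m:ℤ) := abs_le.mpr hiI
    have h4 : 4 * m ≤ k := by omega
    have h4' : (4 * m : ℤ) ≤ (k:ℤ) := by exact_mod_cast h4
    linarith
  have keyx : ∀ x : ℤ × ℤ, ∃ ab : E3 × E3, x.1 ∈ I → x.2 ∈ I →
      IsDelaunayEdge S ab.1 ab.2 ∧ dist ab.1 (rowP k x.1) = 1 ∧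
        dist ab.2 (rowQ k x.2) = 1 := by
    intro x
    by_cases h : x.1 ∈ I ∧ x.2 ∈ I
    · obtain ⟨a, b, h1, h2, h3⟩ :=
        key_edge hk hε0 hε hS hsample (hmem _ h.1) (hmem _ h.2)
      exact ⟨(a, b), fun _ _ => ⟨h1, h2, h3⟩⟩
    · exact ⟨(mk3 0 0 0, mk3 0 0 0), fun h1 h2 => absurd ⟨h1, h2⟩ h⟩
  choose f hf using keyx
  set D : Set (E3 × E3) := {pq | IsDelaunayEdge S pq.1 pq.2} with hDdef
  have hDfin : D.Finite :=
    (S.finite_toSet.prod S.finite_toSet).subset (fun pq hpq => ⟨hpq.1, hpq.2.1⟩)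
  set T : Finset ((ℤ × ℤ) × Bool) := (I ×ˢ I) ×ˢ (Finset.univ : Finset Bool) with hTdef
  set G : (ℤ × ℤ) × Bool → E3 × E3 :=
    fun y => cond y.2 (f y.1) ((f y.1).2, (f y.1).1) with hGdef
  have hmemT : ∀ y : (ℤ × ℤ) × Bool, y ∈ T → y.1.1 ∈ I ∧ y.1.2 ∈ I := by
    intro y hy
    rw [hTdef, Finset.mem_product] at hy
    obtain ⟨hy1, -⟩ := hy
    rw [Finset.mem_product] at hy1
    exact hy1
  have hGmem : ∀ y ∈ T, G y ∈ hDfin.toFinset := by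
    intro y hy
    obtain ⟨h1, h2⟩ := hmemT y hy
    obtain ⟨hd, -, -⟩ := hf y.1 h1 h2
    rw [Set.Finite.mem_toFinset]
    rcases y with ⟨x, b⟩
    cases b
    · have hh : G (x, false) = ((f x).2, (f x).1) := by simp [hGdef]
      rw [hh]
      exact hd.symm'
    · have hh : G (x, true) = f x := by simp [hGdef]
      rw [hh]
      exact hd
  have hGinj : Set.InjOn G ↑T := by
    intro y hy y' hy' hEq
    rcases y with ⟨x, b⟩
    rcases y' with ⟨x', b'⟩
    obtain ⟨h1, h2⟩ := hmemT (x, b) (by exact_mod_cast hy)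
    obtain ⟨h1', h2'⟩ := hmemT (x', b') (by exact_mod_cast hy')
    obtain ⟨-, ha, hb⟩ := hf x h1 h2
    obtain ⟨-, ha', hb'⟩ := hf x' h1' h2'
    have e1 := congrArg Prod.fst hEq
    have e2 := congrArg Prod.snd hEq
    cases b <;> cases b' <;>
      simp only [hGdef, Bool.cond_false, Bool.cond_true] at e1 e2
    · have hx1 : x.1 = x'.1 := eq_of_sphereP hk3 ha (by rw [e2]; exact ha')
      have hx2 : x.2 = x'.2 := eq_of_sphereQ hk3 hb (by rw [e1]; exact hb')
      rw [Prod.ext_iff, Prod.ext_iff]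
      exact ⟨⟨hx1, hx2⟩, rfl⟩
    · rw [← e1] at ha'
      exact (not_both_PQ hk3 ha' hb).elim
    · rw [← e1] at hb'
      exact (not_both_PQ hk3 ha hb').elim
    · have hx1 : x.1 = x'.1 := eq_of_sphereP hk3 ha (by rw [e1]; exact ha')
      have hx2 : x.2 = x'.2 := eq_of_sphereQ hk3 hb (by rw [e2]; exact hb')
      rw [Prod.ext_iff, Prod.ext_iff]
      exact ⟨⟨hx1, hx2⟩, rfl⟩
  have hcard : T.card ≤ hDfin.toFinset.card :=
    Finset.card_le_card_of_injOn G hGmem hGinj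
  have hTcard : T.card = (2*m+1) * (2*m+1) * 2 := by
    rw [hTdef, Finset.card_product, Finset.card_product, hIcard]
    simp [Finset.card_univ]
  have hncard : D.ncard = hDfin.toFinset.card := Set.ncard_eq_toFinset_card D hDfin
  have hDC : delaunayEdgeCount S = D.ncard / 2 := rfl
  have hcount : (2*m+1) * (2*m+1) ≤ delaunayEdgeCount S := by
    rw [hDC, hncard]
    omega
  -- final numeric estimate
  have hkm : k ≤ 4*m + 3 := by omega
  have hkm' : (k:ℝ) ≤ 4*(m:ℝ) + 3 := by exact_mod_cast hkm
  have hcast : (((2*m+1) * (2*m+1) : ℕ) : ℝ) ≤ (delaunayEdgeCount S : ℝ) := by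
    exact_mod_cast hcount
  have hm0 : (0:ℝ) ≤ (m:ℝ) := Nat.cast_nonneg m
  have : (1/16 : ℝ) * (k:ℝ)^2 ≤ (((2*m+1) * (2*m+1) : ℕ) : ℝ) := by
    push_cast
    nlinarith
  linarith
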